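/- Let ψ : ℝⁿ ⇉ ℝⁿ satisfy the (Γ₁)-condition and V : ℝⁿ → ℝⁿ be L-Lipschitz continuous and η-strongly monotone. Let μ > 0 and ρ > 0 satisfy ‖P_{ψ(r)}(y) − P_{ψ(s)}(y)‖ ≤ ρ‖r − s‖ for all y, r, s ∈ ℝⁿ, and assume θ := η − ρ − 1/2 − L²/2 − μ²/2 + μη > 0. Let x* be a solution of the inverse quasi-variational inequality problem. Then for all w ∈ ℝⁿ, θ ‖w − x*‖ ≤ ‖V(w) − P_{ψ(w)}(V(w) − μw)‖. -/
import Mathlib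


open scoped RealInnerProductSpace
open MeasureTheory

/- Metric projection onto a set `C ⊆ ℝⁿ`: when `C` is nonempty, closed and convex this is
the unique nearest point of `C`. -/
open Classical in
noncomputable def metricProj {d : ℕ} (C : Set (EuclideanSpace ℝ (Fin d)))
    (x : EuclideanSpace ℝ (Fin d)) : EuclideanSpace ℝ (Fin d) :=
  if h : ∃ y, y ∈ C ∧ ∀ z ∈ C, ‖x - y‖ ≤ ‖x - z‖ then h.choose else x

section aux
variable {d : ℕ} {C : Set (EuclideanSpace ℝ (Fin d))}

lemma metricProj_spec (hne : C.Nonempty) (hcl : IsClosed C) (hconv : Convex ℝ C)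
    (x : EuclideanSpace ℝ (Fin d)) :
    metricProj C x ∈ C ∧ ∀ z ∈ C, ⟪x - metricProj C x, z - metricProj C x⟫ ≤ 0 := by
  have hbdd : BddBelow (Set.range fun w : C => ‖x - (w : EuclideanSpace ℝ (Fin d))‖) :=
    ⟨0, by rintro b ⟨w, rfl⟩; positivity⟩
  have hex : ∃ y, y ∈ C ∧ ∀ z ∈ C, ‖x - y‖ ≤ ‖x - z‖ := by
    obtain ⟨v, hv, hmin⟩ := exists_norm_eq_iInf_of_complete_convex hne hcl.isComplete hconv x
    exact ⟨v, hv, fun z hz => hmin ▸ ciInf_le hbdd ⟨z, hz⟩⟩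
  rw [metricProj, dif_pos hex]
  obtain ⟨hp, hpmin⟩ := hex.choose_spec
  haveI : Nonempty C := hne.to_subtype
  refine ⟨hp, ?_⟩
  have hinf : ‖x - hex.choose‖ = ⨅ w : C, ‖x - (w : EuclideanSpace ℝ (Fin d))‖ :=
    le_antisymm (le_ciInf fun w => hpmin w w.2) (ciInf_le hbdd ⟨_, hp⟩)
  exact (norm_eq_iInf_iff_real_inner_le_zero hconv hp).mp hinf

lemma metricProj_unique (hne : C.Nonempty) (hcl : IsClosed C) (hconv : Convex ℝ C)
    {x q : EuclideanSpace ℝ (Fin d)} (hq : q ∈ C)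
    (hvar : ∀ z ∈ C, ⟪x - q, z - q⟫ ≤ 0) : metricProj C x = q := by
  obtain ⟨hp, hpvar⟩ := metricProj_spec hne hcl hconv x
  set p := metricProj C x
  have h1 := hpvar q hq
  have h2 := hvar p hp
  have hsum : ⟪x - p, q - p⟫ - ⟪x - q, q - p⟫ = ⟪q - p, q - p⟫ := by
    rw [← inner_sub_left]; congr 1; abel
  have h2' : -⟪x - q, q - p⟫ ≤ 0 := by
    rw [show q - p = -(p - q) by abel, inner_neg_right]; linarith
  have hle : ‖q - p‖ ^ 2 ≤ 0 := by
    rw [← real_inner_self_eq_norm_sq, ← hsum]; linarith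
  have : q - p = 0 := by
    have := norm_nonneg (q - p)
    have h0 : ‖q - p‖ = 0 := by nlinarith
    simpa using h0
  have := sub_eq_zero.mp this
  exact this.symm

lemma metricProj_nonexpansive (hne : C.Nonempty) (hcl : IsClosed C) (hconv : Convex ℝ C)
    (a b : EuclideanSpace ℝ (Fin d)) :
    ‖metricProj C a - metricProj C b‖ ≤ ‖a - b‖ := by
  obtain ⟨hpa, ha⟩ := metricProj_spec hne hcl hconv a
  obtain ⟨hpb, hb⟩ := metricProj_spec hne hcl hconv b
  set pa := metricProj C a
  set pb := metricProj C b
  have h1 := ha pb hpb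
  have h2 := hb pa hpa
  have key : ‖pa - pb‖ ^ 2 ≤ ⟪a - b, pa - pb⟫ := by
    have e1 : ⟪a - b, pa - pb⟫ - ⟪pa - pb, pa - pb⟫ = ⟪(a - pa) - (b - pb), pa - pb⟫ := by
      rw [← inner_sub_left]; congr 1; abel
    have e2 : ⟪(a - pa) - (b - pb), pa - pb⟫ = -⟪a - pa, pb - pa⟫ - ⟪b - pb, pa - pb⟫ := by
      rw [inner_sub_left, show pb - pa = -(pa - pb) by abel, inner_neg_right]; ring
    have : 0 ≤ ⟪a - b, pa - pb⟫ - ⟪pa - pb, pa - pb⟫ := by rw [e1, e2]; linarith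
    rw [← real_inner_self_eq_norm_sq]; linarith
  have hcs := real_inner_le_norm (a - b) (pa - pb)
  nlinarith [norm_nonneg (pa - pb), norm_nonneg (a - b)]

end aux

/-- If `θ := η − ρ − 1/2 − L²/2 − μ²/2 + μη > 0` and `x*` solves the IQVIP, then
`θ ‖w − x*‖ ≤ ‖V w − P_{ψ w}(V w − μ w)‖` for all `w`. -/
theorem stmt_7 {d : ℕ} (ψ : EuclideanSpace ℝ (Fin d) → Set (EuclideanSpace ℝ (Fin d)))
    (V : EuclideanSpace ℝ (Fin d) → EuclideanSpace ℝ (Fin d)) (L η μ ρ θ : ℝ)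
    (hΓ₁ : ∀ x, (ψ x).Nonempty ∧ IsClosed (ψ x) ∧ Convex ℝ (ψ x))
    (hL : ∀ y z, ‖V y - V z‖ ≤ L * ‖y - z‖)
    (hη : ∀ y z, η * ‖y - z‖ ^ 2 ≤ ⟪V y - V z, y - z⟫)
    (hμ : 0 < μ) (hρ : 0 < ρ)
    (hproj : ∀ y r s, ‖metricProj (ψ r) y - metricProj (ψ s) y‖ ≤ ρ * ‖r - s‖)
    (hθ : θ = η - ρ - 1/2 - L^2/2 - μ^2/2 + μ*η) (hθpos : 0 < θ)
    (xs : EuclideanSpace ℝ (Fin d))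
    (hxs : V xs ∈ ψ xs ∧ ∀ z ∈ ψ xs, 0 ≤ ⟪xs, z - V xs⟫) :
    ∀ w : EuclideanSpace ℝ (Fin d),
      θ * ‖w - xs‖ ≤ ‖V w - metricProj (ψ w) (V w - μ • w)‖ := by
  intro w
  obtain ⟨hne_s, hcl_s, hcv_s⟩ := hΓ₁ xs
  -- x* is a fixed point of the projection map
  have hstar : metricProj (ψ xs) (V xs - μ • xs) = V xs := by
    refine metricProj_unique hne_s hcl_s hcv_s hxs.1 fun z hz => ?_
    have e : (V xs - μ • xs) - V xs = -(μ • xs) := by abel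
    rw [e, inner_neg_left, real_inner_smul_left]
    have := hxs.2 z hz
    nlinarith
  set p := metricProj (ψ w) (V w - μ • w) with hp
  set a := V w - V xs with ha
  set u := w - xs with hu
  set q := metricProj (ψ xs) (V w - μ • w) with hq
  -- ‖p - V xs‖ ≤ ρ ‖u‖ + ‖a - μ • u‖
  have h1 : ‖p - q‖ ≤ ρ * ‖u‖ := hproj (V w - μ • w) w xs
  have h2 : ‖q - V xs‖ ≤ ‖a - μ • u‖ := by
    have := metricProj_nonexpansive hne_s hcl_s hcv_s (V w - μ • w) (V xs - μ • xs)
    rw [hstar] at this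
    calc ‖q - V xs‖ ≤ ‖(V w - μ • w) - (V xs - μ • xs)‖ := this
      _ = ‖a - μ • u‖ := by rw [ha, hu]; congr 1; rw [smul_sub]; abel
  have hA : ‖p - V xs‖ ≤ ρ * ‖u‖ + ‖a - μ • u‖ :=
    (norm_sub_le_norm_sub_add_norm_sub p q (V xs)).trans (by linarith)
  -- ‖a - μ•u‖² ≤ (L² + μ² - 2μη) ‖u‖²
  have hB : ‖a - μ • u‖ ^ 2 ≤ (L^2 + μ^2 - 2*μ*η) * ‖u‖ ^ 2 := by
    have hexp : ‖a - μ • u‖ ^ 2 = ‖a‖ ^ 2 - 2 * (μ * ⟪a, u⟫) + μ^2 * ‖u‖ ^ 2 := by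
      rw [norm_sub_sq_real, real_inner_smul_right, norm_smul]
      rw [Real.norm_eq_abs, abs_of_pos hμ]
      ring
    have hLu : ‖a‖ ≤ L * ‖u‖ := hL w xs
    have hmono : η * ‖u‖ ^ 2 ≤ ⟪a, u⟫ := hη w xs
    nlinarith [norm_nonneg a, norm_nonneg u]
  -- strong monotonicity lower bound
  have hC : η * ‖u‖ ^ 2 ≤ ‖a‖ * ‖u‖ :=
    (hη w xs).trans (real_inner_le_norm a u)
  -- triangle: ‖a‖ ≤ ‖V w - p‖ + ‖p - V xs‖
  have hT : ‖a‖ ≤ ‖V w - p‖ + ‖p - V xs‖ := norm_sub_le_norm_sub_add_norm_sub _ _ _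
  -- combine
  set n := ‖u‖ with hn
  set m := ‖a - μ • u‖ with hm
  set R := ‖V w - p‖ with hR
  have hmn : m * n ≤ (m^2 + n^2) / 2 := by nlinarith [sq_nonneg (m - n)]
  have hn0 : 0 ≤ n := hn ▸ norm_nonneg u
  set A := ‖a‖ with hA'
  have hA0 : 0 ≤ A := hA' ▸ norm_nonneg a
  clear_value n m R A
  clear_value p a u q
  have hTn : A * n ≤ R * n + ρ * n^2 + m * n := by
    calc A * n ≤ (R + ρ * n + m) * n :=
          mul_le_mul_of_nonneg_right (by linarith) hn0
      _ = R * n + ρ * n^2 + m * n := by ring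
  have hkey : θ * n ^ 2 ≤ R * n := by
    rw [hθ]; linarith
  rcases eq_or_lt_of_le hn0 with h0 | h0
  · rw [← h0, mul_zero]
    exact hR ▸ norm_nonneg (V w - p)
  · refine le_of_mul_le_mul_right ?_ h0
    calc θ * n * n = θ * n ^ 2 := by ring
      _ ≤ R * n := hkey
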